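/- There exists an automatic successor tree whose Cantor–Bendixson rank is exactly ω, and there exists an automatic successor tree whose Cantor–Bendixson rank is exactly ω + 1. -/

import Mathlib

namespace AutoStruct

/-! ### Regular languages, convolutions, regular relations -/

/-- A language is regular if it is accepted by a DFA with finitely many states. -/
def IsRegularLang {α : Type} (L : Set (List α)) : Prop :=
  ∃ (σ : Type) (_ : Fintype σ) (M : DFA α σ), M.accepts = L

/-- Convolution of a pair of words, using `none` as the padding symbol `◇`. -/
def conv2 {α : Type} (u v : List α) : List (Option α × Option α) :=
  (List.range (max u.length v.length)).map fun k => (u[k]?, v[k]?)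

/-- Convolution of an `n`-tuple of words, using `none` as the padding symbol `◇`. -/
def conv {α : Type} {n : ℕ} (w : Fin n → List α) : List (Fin n → Option α) :=
  (List.range (Finset.univ.sup fun i => (w i).length)).map fun k i => (w i)[k]?

/-- A binary relation on words is regular if the language of convolutions of its pairs
is regular. -/
def IsRegularRel2 {α : Type} (r : List α → List α → Prop) : Prop :=
  IsRegularLang {w | ∃ u v, r u v ∧ w = conv2 u v}

/-- An `n`-ary relation on words is regular if the language of convolutions of its tuples
is regular. -/
def IsRegularRel {α : Type} {n : ℕ} (R : (Fin n → List α) → Prop) : Prop :=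
  IsRegularLang {w | ∃ t, R t ∧ w = conv t}

/-! ### Ordinal heights of well-founded relations -/

/-- The rank `r_A(x) = sup { r_A(y) + 1 : (y,x) ∈ R }` of an element of a well-founded
relation. -/
noncomputable def wfRank {β : Type} {r : β → β → Prop} (h : WellFounded r) (x : β) :
    Ordinal :=
  (h.apply x).rank

/-- The ordinal height `r(A) = sup { r_A(x) : x ∈ A }` of a well-founded relation. -/
noncomputable def relHeight {β : Type} {r : β → β → Prop} (h : WellFounded r) : Ordinal :=
  ⨆ x, wfRank h x

/-! ### Computable ordinals -/

/-- An ordinal is computable if it is the order type of a computable (decidable) well-ordering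
of (a decidable set of) natural numbers. -/
def IsComputableOrdinal (α : Ordinal) : Prop :=
  ∃ (A : Set ℕ) (r : ℕ → ℕ → Prop) (_ : ComputablePred fun n => n ∈ A)
    (_ : ComputablePred fun p : ℕ × ℕ => r p.1 p.2)
    (hwo : IsWellOrder {n // n ∈ A} fun x y => r x.1 y.1),
    @Ordinal.type _ _ hwo = α

/-- `ω₁^CK`, the least non-computable ordinal. -/
noncomputable def omega1CK : Ordinal :=
  sInf {α | ¬ IsComputableOrdinal α}

/-! ### Scott rank machinery for relational structures -/

section ScottRank

variable {D : Type}

/-- Atomic (quantifier-free) equivalence of two tuples in a relational structure with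
relations `rel i` of arity `ar i`: the tuples satisfy the same quantifier-free formulas. -/
def atomEquiv {ν : ℕ} {ar : Fin ν → ℕ} (rel : (i : Fin ν) → (Fin (ar i) → D) → Prop)
    {k : ℕ} (a b : Fin k → D) : Prop :=
  (∀ i j, a i = a j ↔ b i = b j) ∧
  ∀ (i : Fin ν) (f : Fin (ar i) → Fin k), rel i (a ∘ f) ↔ rel i (b ∘ f)

/-- The back-and-forth equivalence relations `ā ≡^α b̄` on tuples of a relational
structure. -/
noncomputable def bfEquiv {ν : ℕ} {ar : Fin ν → ℕ}
    (rel : (i : Fin ν) → (Fin (ar i) → D) → Prop)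
    (α : Ordinal) (k : ℕ) (a b : Fin k → D) : Prop :=
  if α = 0 then atomEquiv rel a b
  else ∀ β < α,
    (∀ (l : ℕ) (c : Fin l → D), ∃ d : Fin l → D,
      bfEquiv rel β (k + l) (Fin.append a c) (Fin.append b d)) ∧
    (∀ (l : ℕ) (d : Fin l → D), ∃ c : Fin l → D,
      bfEquiv rel β (k + l) (Fin.append a c) (Fin.append b d))
termination_by α
decreasing_by all_goals assumption

/-- An automorphism of a relational structure. -/
def IsAutomorphism {ν : ℕ} {ar : Fin ν → ℕ} (rel : (i : Fin ν) → (Fin (ar i) → D) → Prop)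
    (g : D ≃ D) : Prop :=
  ∀ (i : Fin ν) (t : Fin (ar i) → D), rel i t ↔ rel i fun j => g (t j)

/-- The Scott rank of a tuple: the least `β` such that `≡^β`-equivalence to the tuple implies
being in the same automorphism orbit. -/
noncomputable def tupleSR {ν : ℕ} {ar : Fin ν → ℕ}
    (rel : (i : Fin ν) → (Fin (ar i) → D) → Prop) {k : ℕ} (a : Fin k → D) : Ordinal :=
  sInf {β | ∀ b : Fin k → D, bfEquiv rel β k a b →
    ∃ g : D ≃ D, IsAutomorphism rel g ∧ ∀ i, g (a i) = b i}

/-- The Scott rank of a relational structure: the least ordinal greater than the Scott ranks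
of all finite tuples. -/
noncomputable def scottRank {ν : ℕ} {ar : Fin ν → ℕ}
    (rel : (i : Fin ν) → (Fin (ar i) → D) → Prop) : Ordinal :=
  sInf {γ | ∀ (k : ℕ) (a : Fin k → D), tupleSR rel a < γ}

end ScottRank

/-! ### Word structures: automatic and computable structures -/

/-- A structure `(A; R₁, …, R_ν)` whose domain is a set of words over the alphabet `α`,
with `ν` relations, the `i`-th of arity `ar i`. -/
structure WordStructure (α : Type) (ν : ℕ) (ar : Fin ν → ℕ) where
  dom : Set (List α)
  rel : (i : Fin ν) → (Fin (ar i) → List α) → Prop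
  rel_dom : ∀ i t, rel i t → ∀ j, t j ∈ dom

/-- The relations of a word structure, restricted to (the subtype of) its domain. -/
def WordStructure.relOn {α : Type} {ν : ℕ} {ar : Fin ν → ℕ} (S : WordStructure α ν ar) :
    (i : Fin ν) → (Fin (ar i) → ↥S.dom) → Prop :=
  fun i t => S.rel i fun j => ↑(t j)

/-- A word structure is automatic if its domain is a regular language and all its relations
are regular. -/
def WordStructure.IsAutomatic {α : Type} {ν : ℕ} {ar : Fin ν → ℕ}
    (S : WordStructure α ν ar) : Prop :=
  IsRegularLang S.dom ∧ ∀ i, IsRegularRel (S.rel i)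

/-- A word structure is computable if its domain and all its relations are computable. -/
def WordStructure.IsComputableStr {α : Type} [Primcodable α] {ν : ℕ} {ar : Fin ν → ℕ}
    (S : WordStructure α ν ar) : Prop :=
  ComputablePred (fun w : List α => w ∈ S.dom) ∧
    ∀ i, ComputablePred fun t : Fin (ar i) → List α => S.rel i t

/-- The Scott rank of a word structure. -/
noncomputable def WordStructure.SR {α : Type} {ν : ℕ} {ar : Fin ν → ℕ}
    (S : WordStructure α ν ar) : Ordinal :=
  scottRank S.relOn

/-! ### Abstract relational structures, isomorphism, ω-fold disjoint union -/

/-- An abstract relational structure with `ν` relations of arities `ar`. -/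
structure RelStruct (ν : ℕ) (ar : Fin ν → ℕ) where
  carrier : Type
  rel : (i : Fin ν) → (Fin (ar i) → carrier) → Prop

/-- The abstract relational structure underlying a word structure. -/
def WordStructure.toRelStruct {α : Type} {ν : ℕ} {ar : Fin ν → ℕ}
    (S : WordStructure α ν ar) : RelStruct ν ar :=
  ⟨↥S.dom, S.relOn⟩

/-- Isomorphism of abstract relational structures. -/
def RelStruct.Iso {ν : ℕ} {ar : Fin ν → ℕ} (S T : RelStruct ν ar) : Prop :=
  ∃ g : S.carrier ≃ T.carrier, ∀ i t, S.rel i t ↔ T.rel i fun j => g (t j)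

/-- The ω-fold disjoint union of an abstract relational structure: countably many disjoint
copies, a relation holding of a tuple iff all components lie in the same copy and the
corresponding tuple satisfies the relation in the original structure. -/
def omegaFold {ν : ℕ} {ar : Fin ν → ℕ} (S : RelStruct ν ar) : RelStruct ν ar :=
  ⟨S.carrier × ℕ, fun i t => (∀ j j', (t j).2 = (t j').2) ∧ S.rel i fun j => (t j).1⟩

/-! ### Trees and Cantor–Bendixson rank -/

/-- `(T, le)` is a partial order tree: `le` is a partial order with a least element in which
every set `{x : x ≤ y}` is finite and linearly ordered. -/
def IsPOTree {T : Type} (le : T → T → Prop) : Prop :=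
  (∀ x, le x x) ∧ (∀ x y z, le x y → le y z → le x z) ∧
  (∀ x y, le x y → le y x → x = y) ∧
  (∃ r, ∀ x, le r x) ∧
  (∀ y, {x | le x y}.Finite ∧ ∀ x z, le x y → le z y → le x z ∨ le z x)

/-- `(T, S)` is a successor tree: the reflexive–transitive closure of `S` is a partial order
tree. -/
def IsSuccTree {T : Type} (S : T → T → Prop) : Prop :=
  IsPOTree (Relation.ReflTransGen S)

/-- The derivative of (a subset of) a successor tree: the set of nodes lying on at least two
distinct infinite paths within the subset. -/
def treeDeriv {T : Type} (S : T → T → Prop) (X : Set T) : Set T :=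
  {x ∈ X | ∃ p q : ℕ → T, p 0 = x ∧ q 0 = x ∧ (∀ n, p n ∈ X) ∧ (∀ n, q n ∈ X) ∧
    (∀ n, S (p n) (p (n + 1))) ∧ (∀ n, S (q n) (q (n + 1))) ∧ p ≠ q}

/-- The transfinite iteration of the tree derivative, starting from the whole tree. -/
noncomputable def treeDerivIter {T : Type} (S : T → T → Prop) (α : Ordinal) : Set T :=
  Ordinal.limitRecOn α Set.univ (fun _ X => treeDeriv S X)
    (fun o _ ih => ⋂ (β : Ordinal) (h : β < o), ih β h)

/-- The Cantor–Bendixson rank of a successor tree: the least `α` such that the `α`-th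
derivative equals the `α+1`-st derivative. -/
noncomputable def CBrank {T : Type} (S : T → T → Prop) : Ordinal :=
  sInf {α | treeDerivIter S (α + 1) = treeDerivIter S α}

/-- The derivative of (a subset of) a partial order tree: the set of nodes lying on at least
two distinct infinite paths (i.e. admitting two eventually incomparable infinite strictly
increasing chains) within the subset. -/
def poDeriv {T : Type} (le : T → T → Prop) (X : Set T) : Set T :=
  {x ∈ X | ∃ p q : ℕ → T, p 0 = x ∧ q 0 = x ∧ (∀ n, p n ∈ X) ∧ (∀ n, q n ∈ X) ∧
    (∀ n, le (p n) (p (n + 1)) ∧ p n ≠ p (n + 1)) ∧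
    (∀ n, le (q n) (q (n + 1)) ∧ q n ≠ q (n + 1)) ∧
    ∃ n m, ¬ le (p n) (q m) ∧ ¬ le (q m) (p n)}

noncomputable def poDerivIter {T : Type} (le : T → T → Prop) (α : Ordinal) : Set T :=
  Ordinal.limitRecOn α Set.univ (fun _ X => poDeriv le X)
    (fun o _ ih => ⋂ (β : Ordinal) (h : β < o), ih β h)

/-- The Cantor–Bendixson rank of a partial order tree. -/
noncomputable def CBrankPO {T : Type} (le : T → T → Prop) : Ordinal :=
  sInf {α | poDerivIter le (α + 1) = poDerivIter le α}

/-- The product of two successor trees, where `r₂` is the root of the second tree. -/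
def prodSucc {T₁ T₂ : Type} (S₁ : T₁ → T₁ → Prop) (S₂ : T₂ → T₂ → Prop) (r₂ : T₂) :
    T₁ × T₂ → T₁ × T₂ → Prop :=
  fun p q =>
    (p.2 = r₂ ∧ ((q.1 = p.1 ∧ S₂ p.2 q.2) ∨ (S₁ p.1 q.1 ∧ p.2 = q.2))) ∨
    (p.2 ≠ r₂ ∧ q.1 = p.1 ∧ S₂ p.2 q.2)

/-! ### Locally finite graphs -/

/-- A directed graph is locally finite if every vertex has finitely many neighbours
(in either direction). -/
def LocallyFiniteGraph {V : Type} (E : V → V → Prop) : Prop :=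
  ∀ x, {y | E x y ∨ E y x}.Finite

/-- A graph as a relational structure with one binary relation. -/
def graphRel {V : Type} (E : V → V → Prop) : (i : Fin 1) → (Fin 2 → V) → Prop :=
  fun _ t => E (t 0) (t 1)

/-- `ball E U n` is the `n`-neighbourhood of `U`: vertices reachable from `U` by `n` or fewer
edges (traversed in either direction). -/
def ball {V : Type} (E : V → V → Prop) (U : Set V) : ℕ → Set V
  | 0 => U
  | n + 1 => ball E U n ∪ {v | ∃ u ∈ ball E U n, E u v ∨ E v u}

/-- Connectivity with respect to the symmetrization of `E`. -/
def conn {V : Type} (E : V → V → Prop) : V → V → Prop :=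
  Relation.ReflTransGen fun u v => E u v ∨ E v u

inductive Sym (K : Type) where
  | ker (k : K)
  | sep
  | ext
  | pop (k : K)
deriving DecidableEq

namespace Sym

def isTail {K : Type} : Sym K → Bool
  | ext => true
  | pop _ => true
  | _ => false

def isKer {K : Type} : Sym K → Bool
  | ker _ => true
  | _ => false

instance {K : Type} [Fintype K] [DecidableEq K] : Fintype (Sym K) :=
  Fintype.ofEquiv (K ⊕ K ⊕ Bool)
    { toFun := fun x => match x with
        | Sum.inl k => ker k
        | Sum.inr (Sum.inl k) => pop k
        | Sum.inr (Sum.inr true) => sep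
        | Sum.inr (Sum.inr false) => ext
      invFun := fun s => match s with
        | ker k => Sum.inl k
        | pop k => Sum.inr (Sum.inl k)
        | sep => Sum.inr (Sum.inr true)
        | ext => Sum.inr (Sum.inr false)
      left_inv := by rintro (k | (k | (_|_))) <;> rfl
      right_inv := by rintro (k | _ | _ | k) <;> rfl }

end Sym

variable {K : Type}

def kerW (u : List K) : List (Sym K) := u.map Sym.ker

@[simp] lemma kerW_nil : kerW ([] : List K) = [] := rfl
@[simp] lemma kerW_cons (k : K) (u : List K) : kerW (k :: u) = Sym.ker k :: kerW u := rfl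
@[simp] lemma kerW_append (u v : List K) : kerW (u ++ v) = kerW u ++ kerW v := List.map_append

lemma kerW_inj {u v : List K} (h : kerW u = kerW v) : u = v := by
  have : Function.Injective (Sym.ker : K → Sym K) := fun a b h => by cases h; rfl
  exact List.map_injective_iff.2 this h

/-- unique decomposition of a word as kernel-block ++ sep :: tail -/
lemma decomp_unique {u u' : List K} {w w' : List (Sym K)}
    (h : kerW u ++ Sym.sep :: w = kerW u' ++ Sym.sep :: w') : u = u' ∧ w = w' := by
  induction u generalizing u' with
  | nil =>
    cases u' with
    | nil => simpa using h
    | cons a t => simp [kerW] at h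
  | cons a t ih =>
    cases u' with
    | nil => simp [kerW] at h
    | cons b t' =>
      simp only [kerW_cons, List.cons_append, List.cons.injEq, Sym.ker.injEq] at h
      obtain ⟨rfl, h2⟩ := h
      obtain ⟨rfl, rfl⟩ := ih h2
      exact ⟨rfl, rfl⟩

lemma kerW_ne_copy (u u' : List K) (w : List (Sym K)) :
    kerW u ≠ kerW u' ++ Sym.sep :: w := by
  intro h
  induction u generalizing u' with
  | nil => cases u' <;> simp [kerW] at h
  | cons a t ih =>
    cases u' with
    | nil => simp [kerW] at h
    | cons b t' =>
      simp only [kerW_cons, List.cons_append, List.cons.injEq] at h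
      exact ih t' h.2

def Dom : Set (List (Sym K)) :=
  {l | (∃ u : List K, l = kerW u) ∨
    ∃ (u : List K) (w : List (Sym K)), (∀ s ∈ w, s.isTail = true) ∧ l = kerW u ++ Sym.sep :: w}

def Step : List (Sym K) → List (Sym K) → Prop := fun l m =>
  (∃ (u : List K) (k : K), l = kerW u ∧ m = kerW u ++ [Sym.ker k]) ∨
  (∃ u : List K, l = kerW u ∧ m = kerW u ++ [Sym.sep]) ∨
  (∃ (u : List K) (w : List (Sym K)), (∀ s ∈ w, s.isTail = true) ∧
    l = kerW u ++ Sym.sep :: w ∧ m = l ++ [Sym.ext]) ∨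
  (∃ (u : List K) (k : K) (w : List (Sym K)), (∀ s ∈ w, s.isTail = true) ∧
    l = kerW u ++ Sym.ker k :: Sym.sep :: w ∧ m = kerW u ++ Sym.sep :: (w ++ [Sym.pop k]))

lemma step_mem_dom {l m : List (Sym K)} (h : Step l m) : l ∈ Dom ∧ m ∈ Dom := by
  rcases h with ⟨u, k, rfl, rfl⟩ | ⟨u, rfl, rfl⟩ | ⟨u, w, hw, rfl, rfl⟩ | ⟨u, k, w, hw, rfl, rfl⟩
  · constructor
    · exact Or.inl ⟨u, rfl⟩
    · exact Or.inl ⟨u ++ [k], by simp [kerW]⟩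
  · constructor
    · exact Or.inl ⟨u, rfl⟩
    · exact Or.inr ⟨u, [], by simp⟩
  · constructor
    · exact Or.inr ⟨u, w, hw, rfl⟩
    · refine Or.inr ⟨u, w ++ [Sym.ext], ?_, by simp⟩
      intro s hs
      rcases List.mem_append.1 hs with h | h
      · exact hw s h
      · simp at h; subst h; rfl
  · constructor
    · exact Or.inr ⟨u ++ [k], w, hw, by simp [kerW]⟩
    · exact Or.inr ⟨u, w ++ [Sym.pop k], by
        intro s hs
        rcases List.mem_append.1 hs with h | h
        · exact hw s h
        · simp at h; subst h; rfl, rfl⟩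


variable {K : Type}

lemma snoc_inj {α : Type*} {w w' : List α} {a b : α} (h : w ++ [a] = w' ++ [b]) :
    w = w' ∧ a = b := by
  have := List.append_inj' h rfl
  simpa using this

def isPop {K : Type} : Sym K → Bool
  | Sym.pop _ => true
  | _ => false

def mu (l : List (Sym K)) : ℕ := l.length + l.countP isPop

@[simp] lemma countP_pop_kerW (u : List K) : (kerW u).countP isPop = 0 := by
  induction u with
  | nil => rfl
  | cons a t ih => simpa [kerW, List.countP_cons, isPop] using ih

lemma step_mu {l m : List (Sym K)} (h : Step l m) : mu m = mu l + 1 := by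
  rcases h with ⟨u, k, rfl, rfl⟩ | ⟨u, rfl, rfl⟩ | ⟨u, w, hw, rfl, rfl⟩ | ⟨u, k, w, hw, rfl, rfl⟩ <;>
    (simp [mu, List.countP_append, List.countP_cons, isPop, kerW]; try omega)

lemma parent_unique {x y z : List (Sym K)} (hy : Step y x) (hz : Step z x) : y = z := by
  rcases hy with ⟨u, k, rfl, hx⟩ | ⟨u, rfl, hx⟩ | ⟨u, w, hw, rfl, hx⟩ | ⟨u, k, w, hw, hy, hx⟩ <;>
    rcases hz with ⟨u', k', rfl, hx'⟩ | ⟨u', rfl, hx'⟩ | ⟨u', w', hw', rfl, hx'⟩ | ⟨u', k', w', hw', hz, hx'⟩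
  -- 1 vs 1
  · have hx := hx.symm.trans hx'
    have h2 : kerW (u ++ [k]) = kerW (u' ++ [k']) := by simpa [kerW] using hx
    have := kerW_inj h2
    obtain ⟨rfl, h⟩ := List.append_inj' this rfl
    rfl
  -- 1 vs 2
  · exfalso; have hx := hx.symm.trans hx'
    have : kerW (u ++ [k]) = kerW u' ++ Sym.sep :: [] := by simpa [kerW] using hx
    exact kerW_ne_copy _ _ _ this
  -- 1 vs 3
  · exfalso; have hx := hx.symm.trans hx'
    have : kerW (u ++ [k]) = kerW u' ++ Sym.sep :: (w' ++ [Sym.ext]) := by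
      simpa [kerW, List.append_assoc] using hx
    exact kerW_ne_copy _ _ _ this
  -- 1 vs 4
  · exfalso; have hx := hx.symm.trans hx'
    have : kerW (u ++ [k]) = kerW u' ++ Sym.sep :: (w' ++ [Sym.pop k']) := by
      simpa [kerW, List.append_assoc] using hx
    exact kerW_ne_copy _ _ _ this
  -- 2 vs 1
  · exfalso; have hx := hx.symm.trans hx'
    have : kerW (u' ++ [k']) = kerW u ++ Sym.sep :: [] := by simpa [kerW] using hx.symm
    exact kerW_ne_copy _ _ _ this
  -- 2 vs 2
  · have hx := hx.symm.trans hx'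
    have : kerW u ++ Sym.sep :: [] = kerW u' ++ Sym.sep :: [] := by simpa using hx
    obtain ⟨rfl, -⟩ := decomp_unique this
    rfl
  -- 2 vs 3
  · exfalso; have hx := hx.symm.trans hx'
    have : kerW u ++ Sym.sep :: [] = kerW u' ++ Sym.sep :: (w' ++ [Sym.ext]) := by
      simpa [List.append_assoc] using hx
    obtain ⟨rfl, h⟩ := decomp_unique this
    simp at h
  -- 2 vs 4
  · exfalso; have hx := hx.symm.trans hx'
    have : kerW u ++ Sym.sep :: [] = kerW u' ++ Sym.sep :: (w' ++ [Sym.pop k']) := by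
      simpa [List.append_assoc] using hx
    obtain ⟨rfl, h⟩ := decomp_unique this
    simp at h
  -- 3 vs 1
  · exfalso; have hx := hx.symm.trans hx'
    have : kerW (u' ++ [k']) = kerW u ++ Sym.sep :: (w ++ [Sym.ext]) := by
      simpa [kerW, List.append_assoc] using hx.symm
    exact kerW_ne_copy _ _ _ this
  -- 3 vs 2
  · exfalso; have hx := hx.symm.trans hx'
    have : kerW u' ++ Sym.sep :: [] = kerW u ++ Sym.sep :: (w ++ [Sym.ext]) := by
      simpa [List.append_assoc] using hx.symm
    obtain ⟨rfl, h⟩ := decomp_unique this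
    simp at h
  -- 3 vs 3
  · have hx := hx.symm.trans hx'
    have : kerW u ++ Sym.sep :: (w ++ [Sym.ext]) = kerW u' ++ Sym.sep :: (w' ++ [Sym.ext]) := by
      simpa [List.append_assoc] using hx
    obtain ⟨rfl, h⟩ := decomp_unique this
    obtain ⟨rfl, -⟩ := snoc_inj h
    rfl
  -- 3 vs 4
  · exfalso; have hx := hx.symm.trans hx'
    have : kerW u ++ Sym.sep :: (w ++ [Sym.ext]) = kerW u' ++ Sym.sep :: (w' ++ [Sym.pop k']) := by
      simpa [List.append_assoc] using hx
    obtain ⟨rfl, h⟩ := decomp_unique this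
    obtain ⟨-, h2⟩ := snoc_inj h
    exact nomatch h2
  -- 4 vs 1
  · exfalso; have hx := hx.symm.trans hx'
    have : kerW (u' ++ [k']) = kerW u ++ Sym.sep :: (w ++ [Sym.pop k]) := by
      simpa [kerW, List.append_assoc] using hx.symm
    exact kerW_ne_copy _ _ _ this
  -- 4 vs 2
  · exfalso; have hx := hx.symm.trans hx'
    have : kerW u' ++ Sym.sep :: [] = kerW u ++ Sym.sep :: (w ++ [Sym.pop k]) := by
      simpa [List.append_assoc] using hx.symm
    obtain ⟨rfl, h⟩ := decomp_unique this
    simp at h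
  -- 4 vs 3
  · exfalso; have hx := hx.symm.trans hx'
    have : kerW u' ++ Sym.sep :: (w' ++ [Sym.ext]) = kerW u ++ Sym.sep :: (w ++ [Sym.pop k]) := by
      simpa [List.append_assoc] using hx.symm
    obtain ⟨rfl, h⟩ := decomp_unique this
    obtain ⟨-, h2⟩ := snoc_inj h
    exact nomatch h2
  -- 4 vs 4
  · have hx := hx.symm.trans hx'
    have : kerW u ++ Sym.sep :: (w ++ [Sym.pop k]) = kerW u' ++ Sym.sep :: (w' ++ [Sym.pop k']) := by
      simpa using hx
    obtain ⟨rfl, h⟩ := decomp_unique this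
    obtain ⟨rfl, h2⟩ := snoc_inj h
    cases h2
    rw [hy, hz]

/-- every nonempty element of Dom has a parent in Dom -/
lemma exists_parent {x : List (Sym K)} (hx : x ∈ Dom) (hne : x ≠ []) :
    ∃ y, Step y x := by
  rcases hx with ⟨u, rfl⟩ | ⟨u, w, hw, rfl⟩
  · have hu : u ≠ [] := by rintro rfl; exact hne rfl
    obtain ⟨u', k, rfl⟩ := u.eq_nil_or_concat.resolve_left hu
    exact ⟨kerW u', Or.inl ⟨u', k, rfl, by simp [kerW]⟩⟩
  · rcases w.eq_nil_or_concat with rfl | ⟨w', s, rfl⟩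
    · exact ⟨kerW u, Or.inr (Or.inl ⟨u, rfl, rfl⟩)⟩
    · have hw' : ∀ s ∈ w', s.isTail = true := fun s hs => hw s (by simp [hs])
      have hs : s.isTail = true := hw s (by simp)
      cases s with
      | ext => exact ⟨kerW u ++ Sym.sep :: w',
          Or.inr (Or.inr (Or.inl ⟨u, w', hw', rfl, by simp [List.concat_eq_append]⟩))⟩
      | pop k =>
          exact ⟨kerW u ++ Sym.ker k :: Sym.sep :: w',
            Or.inr (Or.inr (Or.inr ⟨u, k, w', hw', rfl, by simp [List.concat_eq_append]⟩))⟩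
      | ker k => simp [Sym.isTail] at hs
      | sep => simp [Sym.isTail] at hs


/-! ### Tree structure on the domain -/

section Tree

abbrev TT (K : Type) := ↥(Dom (K := K))

variable {K : Type}

def SS : TT K → TT K → Prop := fun x y => Step x.1 y.1

def root : TT K := ⟨[], Or.inl ⟨[], rfl⟩⟩

lemma rtg_mu {x y : TT K} (h : Relation.ReflTransGen SS x y) : mu x.1 ≤ mu y.1 := by
  induction h with
  | refl => exact le_refl _
  | tail _ hstep ih => exact le_trans ih (by rw [step_mu hstep]; omega)

lemma rtg_eq_or_lt {x y : TT K} (h : Relation.ReflTransGen SS x y) :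
    x = y ∨ mu x.1 < mu y.1 := by
  rcases h.cases_tail with rfl | ⟨c, hc, hstep⟩
  · exact Or.inl rfl
  · right
    have := rtg_mu hc
    rw [step_mu hstep]
    omega

lemma root_le_aux : ∀ (n : ℕ) (x : TT K), mu x.1 = n → Relation.ReflTransGen SS root x := by
  intro n
  induction n using Nat.strong_induction_on with
  | _ n ih =>
    intro x hx
    by_cases hnil : x.1 = []
    · have : x = root := Subtype.ext hnil
      rw [this]
    · obtain ⟨y, hy⟩ := exists_parent x.2 hnil
      have hyd : y ∈ Dom := (step_mem_dom hy).1
      have hmu : mu x.1 = mu y + 1 := step_mu hy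
      have : Relation.ReflTransGen SS root ⟨y, hyd⟩ := ih (mu y) (by omega) _ rfl
      exact this.tail hy

lemma root_le (x : TT K) : Relation.ReflTransGen SS root x := root_le_aux _ x rfl

lemma linear_aux : ∀ (n : ℕ) (y : TT K), mu y.1 = n → ∀ x z : TT K,
    Relation.ReflTransGen SS x y → Relation.ReflTransGen SS z y →
    Relation.ReflTransGen SS x z ∨ Relation.ReflTransGen SS z x := by
  intro n
  induction n using Nat.strong_induction_on with
  | _ n ih =>
    intro y hy x z hx hz
    rcases hx.cases_tail with rfl | ⟨c, hc, hcy⟩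
    · exact Or.inr hz
    rcases hz.cases_tail with rfl | ⟨d, hd, hdy⟩
    · exact Or.inl hx
    have hcd : c = d := Subtype.ext (parent_unique hcy hdy)
    subst hcd
    have hmu : mu y.1 = mu c.1 + 1 := step_mu hcy
    exact ih (mu c.1) (by omega) c rfl x z hc hd

lemma antisymm_SS {x y : TT K} (h1 : Relation.ReflTransGen SS x y)
    (h2 : Relation.ReflTransGen SS y x) : x = y := by
  rcases rtg_eq_or_lt h1 with rfl | hlt
  · rfl
  · have := rtg_mu h2
    omega

lemma isSuccTree_SS [Fintype K] [DecidableEq K] : IsSuccTree (SS (K := K)) := by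
  refine ⟨fun x => Relation.ReflTransGen.refl,
    fun x y z h1 h2 => h1.trans h2,
    fun x y h1 h2 => antisymm_SS h1 h2,
    ⟨root, root_le⟩, ?_⟩
  intro y
  constructor
  · have hfin : {l : List (Sym K) | l.length ≤ mu y.1}.Finite := List.finite_length_le _ _
    have : {x : TT K | Relation.ReflTransGen SS x y} ⊆
        Subtype.val ⁻¹' {l : List (Sym K) | l.length ≤ mu y.1} := by
      intro x hx
      have := rtg_mu hx
      simp only [Set.mem_preimage, Set.mem_setOf_eq]
      have : x.1.length ≤ mu x.1 := Nat.le_add_right _ _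
      omega
    exact Set.Finite.subset (Set.Finite.preimage (Subtype.val_injective.injOn) hfin) this
  · intro x z hx hz
    exact linear_aux _ y rfl x z hx hz

end Tree


/-! ### Step helper lemmas -/

section StepLemmas

variable {K : Type}

lemma dom_ker (u : List K) : kerW u ∈ Dom := Or.inl ⟨u, rfl⟩

lemma dom_copy {u : List K} {w : List (Sym K)} (hw : ∀ s ∈ w, s.isTail = true) :
    kerW u ++ Sym.sep :: w ∈ Dom := Or.inr ⟨u, w, hw, rfl⟩

lemma step_ker (u : List K) (k : K) : Step (kerW u) (kerW (u ++ [k])) :=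
  Or.inl ⟨u, k, rfl, by simp [kerW]⟩

lemma step_sep (u : List K) : Step (kerW u) (kerW u ++ [Sym.sep]) :=
  Or.inr (Or.inl ⟨u, rfl, rfl⟩)

lemma step_ext {u : List K} {w : List (Sym K)} (hw : ∀ s ∈ w, s.isTail = true) :
    Step (kerW u ++ Sym.sep :: w) (kerW u ++ Sym.sep :: (w ++ [Sym.ext])) :=
  Or.inr (Or.inr (Or.inl ⟨u, w, hw, rfl, by simp⟩))

lemma step_pop {u : List K} (k : K) {w : List (Sym K)} (hw : ∀ s ∈ w, s.isTail = true) :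
    Step (kerW (u ++ [k]) ++ Sym.sep :: w) (kerW u ++ Sym.sep :: (w ++ [Sym.pop k])) :=
  Or.inr (Or.inr (Or.inr ⟨u, k, w, hw, by simp [kerW], rfl⟩))

lemma step_from_copy {u : List K} {w m : List (Sym K)}
    (h : Step (kerW u ++ Sym.sep :: w) m) :
    m = kerW u ++ Sym.sep :: (w ++ [Sym.ext]) ∨
      ∃ (u' : List K) (k : K), u = u' ++ [k] ∧ m = kerW u' ++ Sym.sep :: (w ++ [Sym.pop k]) := by
  rcases h with ⟨u', k', hl, hm⟩ | ⟨u', hl, hm⟩ | ⟨u', w', hw', hl, hm⟩ | ⟨u', k', w', hw', hl, hm⟩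
  · exact absurd hl.symm (kerW_ne_copy _ _ _)
  · exact absurd hl.symm (kerW_ne_copy _ _ _)
  · obtain ⟨rfl, rfl⟩ := decomp_unique hl
    exact Or.inl (by simpa using hm)
  · have hl' : kerW u ++ Sym.sep :: w = kerW (u' ++ [k']) ++ Sym.sep :: w' := by
      simpa [kerW] using hl
    obtain ⟨rfl, rfl⟩ := decomp_unique hl'
    exact Or.inr ⟨u', k', rfl, hm⟩

lemma step_from_ker {u : List K} {m : List (Sym K)} (h : Step (kerW u) m) :
    (∃ k, m = kerW (u ++ [k])) ∨ m = kerW u ++ [Sym.sep] := by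
  rcases h with ⟨u', k', hl, hm⟩ | ⟨u', hl, hm⟩ | ⟨u', w', hw', hl, hm⟩ | ⟨u', k', w', hw', hl, hm⟩
  · obtain rfl := kerW_inj hl
    exact Or.inl ⟨k', by simpa [kerW] using hm⟩
  · obtain rfl := kerW_inj hl
    exact Or.inr hm
  · exact absurd hl (kerW_ne_copy _ _ _)
  · exact absurd (by simpa [kerW] using hl) (kerW_ne_copy u (u' ++ [k']) w')

lemma tails_snoc {w : List (Sym K)} (hw : ∀ s ∈ w, s.isTail = true) {a : Sym K}
    (ha : a.isTail = true) : ∀ s ∈ w ++ [a], s.isTail = true := by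
  intro s hs
  rcases List.mem_append.1 hs with h | h
  · exact hw s h
  · simp at h; subst h; exact ha

lemma tails_rep_ext (i : ℕ) : ∀ s ∈ List.replicate i (Sym.ext : Sym K), s.isTail = true := by
  intro s hs
  rw [List.eq_of_mem_replicate hs]
  rfl

lemma tails_append {w w' : List (Sym K)} (hw : ∀ s ∈ w, s.isTail = true)
    (hw' : ∀ s ∈ w', s.isTail = true) : ∀ s ∈ w ++ w', s.isTail = true := by
  intro s hs
  rcases List.mem_append.1 hs with h | h
  exacts [hw s h, hw' s h]

end StepLemmas

/-! ### The derivative computation -/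

section Deriv

variable {K : Type} [Inhabited K]

/-- survival sets -/
def Sur (K : Type) (n : ℕ) : Set (TT K) :=
  {x | (∃ u : List K, x.1 = kerW u) ∨
    ∃ (u : List K) (w : List (Sym K)), (∀ s ∈ w, s.isTail = true) ∧
      x.1 = kerW u ++ Sym.sep :: w ∧ n ≤ u.length}

def KerSet (K : Type) : Set (TT K) :=
  {x | ∃ u : List K, x.1 = kerW u}

lemma sur_zero : Sur K 0 = Set.univ := by
  ext x
  simp only [Set.mem_univ, iff_true, Sur, Set.mem_setOf_eq]
  rcases x.2 with ⟨u, hu⟩ | ⟨u, w, hw, hx⟩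
  · exact Or.inl ⟨u, hu⟩
  · exact Or.inr ⟨u, w, hw, hx, Nat.zero_le _⟩

lemma ker_mem_sur {x : TT K} (h : x ∈ KerSet K) (n : ℕ) : x ∈ Sur K n := Or.inl h

/-- the ext-path from a copy node -/
lemma ext_path (u : List K) {w : List (Sym K)} (hw : ∀ s ∈ w, s.isTail = true) :
    ∀ i, (kerW u ++ Sym.sep :: (w ++ List.replicate i Sym.ext) ∈ Dom) ∧
      Step (kerW u ++ Sym.sep :: (w ++ List.replicate i Sym.ext))
        (kerW u ++ Sym.sep :: (w ++ List.replicate (i + 1) Sym.ext)) := by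
  intro i
  refine ⟨dom_copy (tails_append hw (tails_rep_ext i)), ?_⟩
  have h := step_ext (u := u) (tails_append hw (tails_rep_ext i))
  have : w ++ List.replicate (i + 1) Sym.ext
      = (w ++ List.replicate i Sym.ext) ++ [(Sym.ext : Sym K)] := by
    rw [List.replicate_succ' (n := i)]
    simp [List.append_assoc]
  rw [this]
  exact h

lemma deriv_sur (n : ℕ) : treeDeriv (SS (K := K)) (Sur K n) = Sur K (n + 1) := by
  apply Set.Subset.antisymm
  · -- ⊆ : uniqueness of paths from budget-n copy nodes
    rintro x ⟨hx, p, q, hp0, hq0, hpX, hqX, hpS, hqS, hpq⟩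
    rcases hx with ⟨u, hu⟩ | ⟨u, w, hw, hxv, hn⟩
    · exact Or.inl ⟨u, hu⟩
    · -- copy node with n ≤ |u|; if n+1 ≤ |u| done, else |u| = n and paths are forced
      by_cases hlen : n + 1 ≤ u.length
      · exact Or.inr ⟨u, w, hw, hxv, hlen⟩
      · exfalso
        have hun : u.length = n := by omega
        -- any path from x within Sur n is the ext-path
        have key : ∀ (r : ℕ → TT K), r 0 = x → (∀ i, r i ∈ Sur K n) →
            (∀ i, SS (r i) (r (i + 1))) →
            ∀ i, (r i).1 = kerW u ++ Sym.sep :: (w ++ List.replicate i Sym.ext) := by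
          intro r hr0 hrX hrS i
          induction i with
          | zero => rw [hr0, hxv]; simp
          | succ i ih =>
            have hstep := hrS i
            rw [SS, ih] at hstep
            rcases step_from_copy hstep with hm | ⟨u', k, huu, hm⟩
            · rw [hm, List.replicate_succ' (n := i)]
              simp [List.append_assoc]
            · -- pop step leads out of Sur n
              exfalso
              have hmem := hrX (i + 1)
              rcases hmem with ⟨u2, hu2⟩ | ⟨u2, w2, hw2, hx2, hn2⟩
              · rw [hm] at hu2
                exact kerW_ne_copy _ _ _ (hu2.symm)
              · rw [hm] at hx2
                obtain ⟨rfl, -⟩ := decomp_unique hx2.symm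
                have hlen2 := congrArg List.length huu
                simp at hlen2
                omega
        have : p = q := by
          funext i
          apply Subtype.ext
          rw [key p hp0 hpX hpS i, key q hq0 hqX hqS i]
        exact hpq this
  · -- ⊇ : construct two paths
    rintro x hx
    have hxSur : x ∈ Sur K n := by
      rcases hx with ⟨u, hu⟩ | ⟨u, w, hw, hxv, hn⟩
      · exact Or.inl ⟨u, hu⟩
      · exact Or.inr ⟨u, w, hw, hxv, by omega⟩
    rcases hx with ⟨u, hu⟩ | ⟨u, w, hw, hxv, hn⟩
    · -- kernel node: spine path vs detour at time n
      refine ⟨Or.inl ⟨u, hu⟩, ?_⟩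
      set d : K := default
      -- path p: pure kernel extension
      refine ⟨fun i => ⟨kerW (u ++ List.replicate i d), dom_ker _⟩,
        fun i => if i ≤ n then ⟨kerW (u ++ List.replicate i d), dom_ker _⟩
          else ⟨kerW (u ++ List.replicate n d) ++ Sym.sep ::
            (([] : List (Sym K)) ++ List.replicate (i - n - 1) Sym.ext),
            dom_copy (tails_append (by simp) (tails_rep_ext _))⟩,
        ?_, ?_, ?_, ?_, ?_, ?_, ?_⟩
      · apply Subtype.ext; simpa using hu.symm
      · apply Subtype.ext; simp; simpa using hu.symm
      · intro i; exact Or.inl ⟨_, rfl⟩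
      · intro i
        by_cases hi : i ≤ n
        · simp only [hi, if_pos]
          exact Or.inl ⟨_, rfl⟩
        · simp only [hi, if_neg, not_false_iff]
          exact Or.inr ⟨u ++ List.replicate n d, _, tails_append (by simp) (tails_rep_ext _),
            rfl, by simp⟩
      · intro i
        simp only [SS]
        have : u ++ List.replicate (i+1) d = (u ++ List.replicate i d) ++ [d] := by
          rw [List.replicate_succ' (n := i)]; simp
        rw [this]
        exact step_ker _ _
      · intro i
        simp only [SS]
        by_cases hi : i ≤ n
        · by_cases hi1 : i + 1 ≤ n
          · simp only [hi, hi1, if_pos]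
            have : u ++ List.replicate (i+1) d = (u ++ List.replicate i d) ++ [d] := by
              rw [List.replicate_succ' (n := i)]; simp
            rw [this]
            exact step_ker _ _
          · -- i = n : sep step
            have hin : i = n := by omega
            subst hin
            simp only [le_refl, if_pos, hi1, if_neg, not_false_iff]
            have h2 : i + 1 - i - 1 = 0 := by omega
            rw [h2]
            simpa using step_sep (u ++ List.replicate i d)
        · -- i > n: ext steps
          have hi1 : ¬ (i + 1 ≤ n) := by omega
          simp only [hi, hi1, if_neg, not_false_iff]
          have h2 : i + 1 - n - 1 = (i - n - 1) + 1 := by omega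
          rw [h2]
          exact (ext_path (u ++ List.replicate n d) (by simp) (i - n - 1)).2
      · -- p ≠ q : differ at index n+1
        intro hpq
        have := congrArg (fun f => (f (n+1)).1) hpq
        simp only at this
        have hn1 : ¬ (n + 1 ≤ n) := by omega
        rw [if_neg hn1] at this
        exact kerW_ne_copy _ _ _ this
    · -- copy node with n+1 ≤ |u|
      refine ⟨Or.inr ⟨u, w, hw, hxv, by omega⟩, ?_⟩
      have hune : u ≠ [] := by rintro rfl; simp at hn
      obtain ⟨u', k, rfl⟩ := u.eq_nil_or_concat.resolve_left hune
      rw [List.concat_eq_append] at *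
      have hu'len : u'.length + 1 = (u' ++ [k]).length := by simp
      -- p : ext path ; q : pop then ext path
      refine ⟨fun i => ⟨kerW (u' ++ [k]) ++ Sym.sep :: (w ++ List.replicate i Sym.ext),
          dom_copy (tails_append hw (tails_rep_ext _))⟩,
        fun i => match i with
          | 0 => x
          | i + 1 => ⟨kerW u' ++ Sym.sep :: ((w ++ [Sym.pop k]) ++ List.replicate i Sym.ext),
              dom_copy (tails_append (tails_snoc hw (a := Sym.pop k) rfl) (tails_rep_ext _))⟩,
        ?_, ?_, ?_, ?_, ?_, ?_, ?_⟩
      · apply Subtype.ext; simp [hxv]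
      · rfl
      · intro i
        exact Or.inr ⟨u' ++ [k], _, tails_append hw (tails_rep_ext _), rfl, by simp at hn ⊢; omega⟩
      · intro i
        match i with
        | 0 => exact hxSur
        | i + 1 =>
          exact Or.inr ⟨u', _, tails_append (tails_snoc hw (a := Sym.pop k) rfl) (tails_rep_ext _), rfl,
            by simp at hn ⊢; omega⟩
      · intro i
        exact (ext_path (u' ++ [k]) hw i).2
      · intro i
        match i with
        | 0 =>
          show Step x.1 _
          rw [hxv]
          simpa using step_pop k hw
        | i + 1 =>
          exact (ext_path u' (tails_snoc hw (a := Sym.pop k) rfl) i).2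
      · intro hpq
        have := congrArg (fun f => (f 1).1) hpq
        simp only at this
        -- p 1 ends with ext, q 1 ends with pop k
        have hL : kerW (u' ++ [k]) ++ Sym.sep :: (w ++ List.replicate 1 Sym.ext)
            = kerW (u' ++ [k]) ++ Sym.sep :: (w ++ [Sym.ext]) := by simp
        have hR : kerW u' ++ Sym.sep :: ((w ++ [Sym.pop k]) ++ List.replicate 0 Sym.ext)
            = kerW u' ++ Sym.sep :: (w ++ [Sym.pop k]) := by simp
        rw [hL, hR] at this
        obtain ⟨-, h2⟩ := decomp_unique this
        obtain ⟨-, h3⟩ := snoc_inj h2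
        exact nomatch h3

end Deriv


/-! ### Iterated derivatives and CB rank -/

section Iter

variable {K : Type} [Inhabited K]

lemma iter_zero' {T : Type} (S : T → T → Prop) : treeDerivIter S 0 = Set.univ := by
  simp [treeDerivIter]

lemma iter_succ' {T : Type} (S : T → T → Prop) (α : Ordinal) :
    treeDerivIter S (α + 1) = treeDeriv S (treeDerivIter S α) := by
  rw [treeDerivIter, Ordinal.add_one_eq_succ, Ordinal.limitRecOn_succ]
  rfl

lemma iter_limit' {T : Type} (S : T → T → Prop) {o : Ordinal} (ho : Order.IsSuccLimit o) :
    treeDerivIter S o = ⋂ (β : Ordinal) (_ : β < o), treeDerivIter S β := by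
  rw [treeDerivIter, Ordinal.limitRecOn_limit _ _ _ _ ho]
  rfl

lemma treeDeriv_empty {T : Type} (S : T → T → Prop) : treeDeriv S ∅ = ∅ := by
  ext x
  simp [treeDeriv]

lemma iter_nat (n : ℕ) : treeDerivIter (SS (K := K)) (n : Ordinal) = Sur K n := by
  induction n with
  | zero => simpa [iter_zero'] using sur_zero.symm
  | succ n ih =>
    have : ((n + 1 : ℕ) : Ordinal) = (n : Ordinal) + 1 := by
      simp
    rw [this, iter_succ', ih, deriv_sur]

lemma iter_omega : treeDerivIter (SS (K := K)) Ordinal.omega0 = KerSet K := by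
  rw [iter_limit' _ Ordinal.isSuccLimit_omega0]
  apply Set.Subset.antisymm
  · intro x hx
    simp only [Set.mem_iInter] at hx
    rcases x.2 with ⟨u, hu⟩ | ⟨u, w, hw, hxv⟩
    · exact ⟨u, hu⟩
    · exfalso
      have hmem := hx ((u.length + 1 : ℕ) : Ordinal) (Ordinal.nat_lt_omega0 _)
      rw [iter_nat] at hmem
      rcases hmem with ⟨u2, hu2⟩ | ⟨u2, w2, hw2, hx2, hn2⟩
      · rw [hxv] at hu2; exact kerW_ne_copy _ _ _ hu2.symm
      · rw [hxv] at hx2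
        obtain ⟨rfl, -⟩ := decomp_unique hx2
        omega
  · intro x hx
    simp only [Set.mem_iInter]
    intro β hβ
    obtain ⟨n, rfl⟩ := Ordinal.lt_omega0.1 hβ
    rw [iter_nat]
    exact ker_mem_sur hx n

lemma sur_ne (n : ℕ) : Sur K (n + 1) ≠ Sur K n := by
  intro h
  have hx : (⟨kerW (List.replicate n (default : K)) ++ [Sym.sep],
      dom_copy (w := []) (by simp)⟩ : TT K) ∈ Sur K n := by
    refine Or.inr ⟨List.replicate n default, [], by simp, by simp, by simp⟩
  rw [← h] at hx
  rcases hx with ⟨u, hu⟩ | ⟨u, w, hw, hx2, hn2⟩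
  · exact kerW_ne_copy _ _ [] (by simpa using hu.symm)
  · have : kerW (List.replicate n (default : K)) ++ Sym.sep :: [] =
        kerW u ++ Sym.sep :: w := by simpa using hx2
    obtain ⟨rfl, -⟩ := decomp_unique this
    simp at hn2

lemma iter_nat_ne (n : ℕ) :
    treeDerivIter (SS (K := K)) ((n : Ordinal) + 1) ≠ treeDerivIter (SS (K := K)) (n : Ordinal) := by
  have : ((n : Ordinal) + 1) = ((n + 1 : ℕ) : Ordinal) := by simp
  rw [this, iter_nat, iter_nat]
  exact sur_ne n

/-- with at least two kernel letters, the kernel is perfect -/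
lemma deriv_ker_perfect (a b : K) (hab : a ≠ b) :
    treeDeriv (SS (K := K)) (KerSet K) = KerSet K := by
  apply Set.Subset.antisymm
  · rintro x ⟨hx, -⟩; exact hx
  · rintro x ⟨u, hu⟩
    refine ⟨⟨u, hu⟩, fun i => ⟨kerW (u ++ List.replicate i a), dom_ker _⟩,
      fun i => ⟨kerW (u ++ List.replicate i b), dom_ker _⟩,
      ?_, ?_, fun i => ⟨_, rfl⟩, fun i => ⟨_, rfl⟩, ?_, ?_, ?_⟩
    · apply Subtype.ext; simpa using hu.symm
    · apply Subtype.ext; simpa using hu.symm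
    · intro i
      change Step (kerW (u ++ List.replicate i a)) (kerW (u ++ List.replicate (i+1) a))
      have : u ++ List.replicate (i+1) a = (u ++ List.replicate i a) ++ [a] := by
        rw [List.replicate_succ' (n := i)]; simp
      rw [this]; exact step_ker _ _
    · intro i
      change Step (kerW (u ++ List.replicate i b)) (kerW (u ++ List.replicate (i+1) b))
      have : u ++ List.replicate (i+1) b = (u ++ List.replicate i b) ++ [b] := by
        rw [List.replicate_succ' (n := i)]; simp
      rw [this]; exact step_ker _ _
    · intro hpq
      have := congrArg (fun f => (f 1).1) hpq
      simp only at this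
      have h2 := kerW_inj this
      simp at h2
      exact hab h2

/-- with a single kernel letter, the kernel is a single path -/
lemma deriv_ker_spine [Subsingleton K] :
    treeDeriv (SS (K := K)) (KerSet K) = ∅ := by
  ext x
  simp only [Set.mem_empty_iff_false, iff_false]
  rintro ⟨⟨u, hu⟩, p, q, hp0, hq0, hpX, hqX, hpS, hqS, hpq⟩
  have key : ∀ (r : ℕ → TT K), r 0 = x → (∀ i, r i ∈ KerSet K) →
      (∀ i, SS (r i) (r (i + 1))) →
      ∀ i, (r i).1 = kerW (u ++ List.replicate i (default : K)) := by
    intro r hr0 hrX hrS i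
    induction i with
    | zero => rw [hr0, hu]; simp
    | succ i ih =>
      have hstep := hrS i
      rw [SS, ih] at hstep
      rcases step_from_ker hstep with ⟨k, hm⟩ | hm
      · rw [hm]
        have : k = (default : K) := Subsingleton.elim _ _
        subst this
        rw [List.replicate_succ' (n := i)]
        simp
      · exfalso
        obtain ⟨u2, hu2⟩ := hrX (i + 1)
        rw [hm] at hu2
        exact kerW_ne_copy u2 (u ++ List.replicate i (default : K)) [] (by simpa using hu2.symm)
  apply hpq
  funext i
  apply Subtype.ext
  rw [key p hp0 hpX hpS i, key q hq0 hqX hqS i]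

theorem cbrank_branching (a b : K) (hab : a ≠ b) :
    CBrank (SS (K := K)) = Ordinal.omega0 := by
  have hmem : Ordinal.omega0 ∈ {α | treeDerivIter (SS (K := K)) (α + 1) = treeDerivIter (SS (K := K)) α} := by
    show treeDerivIter _ _ = _
    rw [iter_succ', iter_omega, deriv_ker_perfect a b hab]
  apply le_antisymm
  · exact csInf_le' hmem
  · apply le_csInf ⟨_, hmem⟩
    intro α hα
    by_contra hlt
    push_neg at hlt
    obtain ⟨n, rfl⟩ := Ordinal.lt_omega0.1 hlt
    exact iter_nat_ne n hα

theorem cbrank_spine [Subsingleton K] :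
    CBrank (SS (K := K)) = Ordinal.omega0 + 1 := by
  have homega1 : treeDerivIter (SS (K := K)) (Ordinal.omega0 + 1) = ∅ := by
    rw [iter_succ', iter_omega, deriv_ker_spine]
  have hmem : Ordinal.omega0 + 1 ∈ {α | treeDerivIter (SS (K := K)) (α + 1) = treeDerivIter (SS (K := K)) α} := by
    show treeDerivIter _ _ = _
    rw [iter_succ', homega1, treeDeriv_empty]
  apply le_antisymm
  · exact csInf_le' hmem
  · apply le_csInf ⟨_, hmem⟩
    intro α hα
    by_contra hlt
    push_neg at hlt
    have : α ≤ Ordinal.omega0 := by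
      rwa [Ordinal.add_one_eq_succ, Order.lt_succ_iff] at hlt
    rcases lt_or_eq_of_le this with hlt2 | rfl
    · obtain ⟨n, rfl⟩ := Ordinal.lt_omega0.1 hlt2
      exact iter_nat_ne n hα
    · rw [Set.mem_setOf_eq, homega1, iter_omega] at hα
      have : (root : TT K) ∈ KerSet K := ⟨[], rfl⟩
      rw [← hα] at this
      exact this

end Iter


/-! ### conv2 lemmas -/

section Conv2

variable {α : Type}

lemma conv2_nil_nil : conv2 ([] : List α) [] = [] := rfl

lemma conv2_cons_cons (a b : α) (u v : List α) :
    conv2 (a :: u) (b :: v) = (some a, some b) :: conv2 u v := by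
  simp only [conv2, List.length_cons, Nat.succ_max_succ, List.range_succ_eq_map,
    List.map_cons, List.map_map]
  constructor <;> try rfl

lemma conv2_nil_cons (b : α) (v : List α) :
    conv2 ([] : List α) (b :: v) = (none, some b) :: conv2 [] v := by
  simp only [conv2, List.length_nil, List.length_cons, Nat.max_eq_right (Nat.zero_le _),
    List.range_succ_eq_map, List.map_cons, List.map_map]
  constructor <;> rfl

lemma conv2_self_append (l : List α) (z : α) :
    conv2 l (l ++ [z]) = (l.map fun a => (some a, some a)) ++ [(none, some z)] := by
  induction l with
  | nil => simp [conv2_nil_cons, conv2_nil_nil]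
  | cons a t ih => simpa [conv2_cons_cons] using ih

lemma conv2_eq_zipWith {l m : List α} (h : l.length = m.length) :
    conv2 l m = List.zipWith (fun a b => ((some a : Option α), (some b : Option α))) l m := by
  induction l generalizing m with
  | nil =>
    cases m with
    | nil => simp [conv2_nil_nil]
    | cons b v => simp at h
  | cons a t ih =>
    cases m with
    | nil => simp at h
    | cons b v =>
      simp only [List.length_cons, Nat.add_right_cancel_iff] at h
      simp [conv2_cons_cons, List.zipWith_cons_cons, ih h]

lemma zipWith_snoc_left {β γ : Type} (f : α → β → γ) (l : List α) (e : α) (m : List β)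
    (h : m.length ≤ l.length) :
    List.zipWith f (l ++ [e]) m = List.zipWith f l m := by
  induction l generalizing m with
  | nil =>
    cases m with
    | nil => simp
    | cons b v => simp at h
  | cons a t ih =>
    cases m with
    | nil => simp
    | cons b v =>
      simp only [List.length_cons] at h
      simp [List.cons_append, List.zipWith_cons_cons, ih v (by omega)]

end Conv2

/-! ### Regularity of the domain -/

section DomRegular

variable {K : Type} [DecidableEq K]

def domDFA (K : Type) : DFA (Sym K) (Option Bool) where
  step := fun s x =>
    match s with
    | some true =>
      match x with
      | Sym.ker _ => some true
      | Sym.sep => some false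
      | _ => none
    | some false => if x.isTail then some false else none
    | none => none
  start := some true
  accept := {s | s.isSome}

lemma domDFA_none (l : List (Sym K)) : (domDFA K).evalFrom none l = none := by
  induction l with
  | nil => rfl
  | cons a t ih => simpa [DFA.evalFrom, domDFA] using ih

lemma domDFA_false (l : List (Sym K)) :
    (domDFA K).evalFrom (some false) l
      = if ∀ s ∈ l, s.isTail = true then some false else none := by
  induction l with
  | nil => simp [DFA.evalFrom]
  | cons a t ih =>
    by_cases ha : a.isTail = true
    · have : (domDFA K).evalFrom (some false) (a :: t)
          = (domDFA K).evalFrom (some false) t := by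
        simp [DFA.evalFrom, domDFA, ha]
      rw [this, ih]
      by_cases ht : ∀ s ∈ t, s.isTail = true
      · simp [ht, ha]
      · have : ¬ ∀ s ∈ a :: t, s.isTail = true := by
          intro hh; exact ht fun s hs => hh s (List.mem_cons_of_mem _ hs)
        simp [ht, this]
    · have : (domDFA K).evalFrom (some false) (a :: t)
          = (domDFA K).evalFrom none t := by
        simp [DFA.evalFrom, domDFA, ha]
      rw [this, domDFA_none]
      simp [ha]

lemma domDFA_true_eq_true (l : List (Sym K)) :
    (domDFA K).evalFrom (some true) l = some true ↔ ∃ u : List K, l = kerW u := by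
  induction l with
  | nil => simp [DFA.evalFrom]; exact ⟨[], rfl⟩
  | cons a t ih =>
    cases a with
    | ker k =>
      have hstep : (domDFA K).evalFrom (some true) (Sym.ker k :: t)
          = (domDFA K).evalFrom (some true) t := rfl
      rw [hstep, ih]
      constructor
      · rintro ⟨u, rfl⟩; exact ⟨k :: u, rfl⟩
      · rintro ⟨u, hu⟩
        cases u with
        | nil => simp [kerW] at hu
        | cons k' u' =>
          simp only [kerW_cons, List.cons.injEq, Sym.ker.injEq] at hu
          exact ⟨u', hu.2⟩
    | sep =>
      have hstep : (domDFA K).evalFrom (some true) (Sym.sep :: t)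
          = (domDFA K).evalFrom (some false) t := rfl
      rw [hstep, domDFA_false]
      constructor
      · intro h
        by_cases ht : ∀ s ∈ t, s.isTail = true <;> simp [ht] at h
      · rintro ⟨u, hu⟩
        cases u <;> simp [kerW] at hu
    | ext =>
      have hstep : (domDFA K).evalFrom (some true) (Sym.ext :: t)
          = (domDFA K).evalFrom none t := rfl
      rw [hstep, domDFA_none]
      constructor
      · intro h; simp at h
      · rintro ⟨u, hu⟩; cases u <;> simp [kerW] at hu
    | pop k =>
      have hstep : (domDFA K).evalFrom (some true) (Sym.pop k :: t)
          = (domDFA K).evalFrom none t := rfl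
      rw [hstep, domDFA_none]
      constructor
      · intro h; simp at h
      · rintro ⟨u, hu⟩; cases u <;> simp [kerW] at hu

lemma domDFA_true_eq_false (l : List (Sym K)) :
    (domDFA K).evalFrom (some true) l = some false ↔
      ∃ (u : List K) (w : List (Sym K)), (∀ s ∈ w, s.isTail = true) ∧
        l = kerW u ++ Sym.sep :: w := by
  induction l with
  | nil =>
    simp only [DFA.evalFrom, List.foldl_nil]
    constructor
    · intro h; simp at h
    · rintro ⟨u, w, hw, hu⟩
      exact absurd hu.symm (by cases u <;> simp [kerW])
  | cons a t ih =>
    cases a with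
    | ker k =>
      have hstep : (domDFA K).evalFrom (some true) (Sym.ker k :: t)
          = (domDFA K).evalFrom (some true) t := rfl
      rw [hstep, ih]
      constructor
      · rintro ⟨u, w, hw, rfl⟩; exact ⟨k :: u, w, hw, rfl⟩
      · rintro ⟨u, w, hw, hu⟩
        cases u with
        | nil => simp [kerW] at hu
        | cons k' u' =>
          simp only [kerW_cons, List.cons_append, List.cons.injEq, Sym.ker.injEq] at hu
          exact ⟨u', w, hw, hu.2⟩
    | sep =>
      have hstep : (domDFA K).evalFrom (some true) (Sym.sep :: t)
          = (domDFA K).evalFrom (some false) t := rfl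
      rw [hstep, domDFA_false]
      constructor
      · intro h
        by_cases ht : ∀ s ∈ t, s.isTail = true
        · exact ⟨[], t, ht, rfl⟩
        · simp [ht] at h
      · rintro ⟨u, w, hw, hu⟩
        cases u with
        | nil =>
          simp only [kerW_nil, List.nil_append, List.cons.injEq] at hu
          rw [hu.2, if_pos hw]
        | cons k' u' => simp [kerW] at hu
    | ext =>
      have hstep : (domDFA K).evalFrom (some true) (Sym.ext :: t)
          = (domDFA K).evalFrom none t := rfl
      rw [hstep, domDFA_none]
      constructor
      · intro h; simp at h
      · rintro ⟨u, w, hw, hu⟩; cases u <;> simp [kerW] at hu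
    | pop k =>
      have hstep : (domDFA K).evalFrom (some true) (Sym.pop k :: t)
          = (domDFA K).evalFrom none t := rfl
      rw [hstep, domDFA_none]
      constructor
      · intro h; simp at h
      · rintro ⟨u, w, hw, hu⟩; cases u <;> simp [kerW] at hu

lemma dom_regular : IsRegularLang (Dom (K := K)) := by
  refine ⟨Option Bool, inferInstance, domDFA K, ?_⟩
  ext l
  rw [DFA.mem_accepts]
  show (domDFA K).evalFrom (some true) l ∈ {s : Option Bool | s.isSome} ↔ _
  simp only [Set.mem_setOf_eq]
  constructor
  · intro h
    rcases ho : (domDFA K).evalFrom (some true) l with _ | b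
    · rw [ho] at h; simp at h
    · cases b
      · exact Or.inr ((domDFA_true_eq_false l).1 ho)
      · exact Or.inl ((domDFA_true_eq_true l).1 ho)
  · intro h
    rcases h with ⟨u, rfl⟩ | ⟨u, w, hw, rfl⟩
    · rw [(domDFA_true_eq_true _).2 ⟨u, rfl⟩]; rfl
    · rw [(domDFA_true_eq_false _).2 ⟨u, w, hw, rfl⟩]; rfl

end DomRegular


/-! ### Regularity of the step relation -/

section StepRegular

variable {K : Type} [DecidableEq K]

abbrev Pr (K : Type) := Option (Sym K) × Option (Sym K)
abbrev StS (K : Type) := Option (Option (Bool ⊕ (K × Sym K)))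

def dkS : StS K := some (some (Sum.inl true))
def dtS : StS K := some (some (Sum.inl false))
def shS (k : K) (p : Sym K) : StS K := some (some (Sum.inr (k, p)))
def finS : StS K := some none

def diagP (l : List (Sym K)) : List (Pr K) := l.map fun a => (some a, some a)
def zipP (l m : List (Sym K)) : List (Pr K) :=
  List.zipWith (fun a b => ((some a : Option (Sym K)), (some b : Option (Sym K)))) l m

@[simp] lemma diagP_nil : diagP ([] : List (Sym K)) = [] := rfl
@[simp] lemma diagP_cons (a : Sym K) (l : List (Sym K)) :
    diagP (a :: l) = (some a, some a) :: diagP l := rfl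
@[simp] lemma diagP_append (l l' : List (Sym K)) :
    diagP (l ++ l') = diagP l ++ diagP l' := List.map_append

lemma zipP_self (l : List (Sym K)) : zipP l l = diagP l := by
  induction l with
  | nil => rfl
  | cons a t ih => simp only [zipP, diagP, List.zipWith_cons_cons, List.map_cons] at *; rw [ih]

def stepDFA (K : Type) [DecidableEq K] : DFA (Pr K) (StS K) where
  step := fun s a =>
    match s with
    | some (some (Sum.inl true)) =>
        match a with
        | (some (Sym.ker x), some (Sym.ker y)) => if x = y then dkS else none
        | (some (Sym.ker k), some Sym.sep) => shS k Sym.sep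
        | (some Sym.sep, some Sym.sep) => dtS
        | (none, some (Sym.ker _)) => finS
        | (none, some Sym.sep) => finS
        | _ => none
    | some (some (Sum.inl false)) =>
        match a with
        | (some x, some y) => if x = y ∧ x.isTail = true then dtS else none
        | (none, some Sym.ext) => finS
        | _ => none
    | some (some (Sum.inr (k, p))) =>
        match a with
        | (some x, some y) => if x = p ∧ y.isTail = true then shS k y else none
        | _ => none
    | some none => none
    | none => none
  start := dkS
  accept := {s | s = finS ∨ ∃ k, s = shS k (Sym.pop k)}

lemma acc_iff (s : StS K) :
    s ∈ (stepDFA K).accept ↔ (s = finS ∨ ∃ k, s = shS k (Sym.pop k)) := Iff.rfl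

@[simp] lemma fin_acc : finS ∈ (stepDFA K).accept := Or.inl rfl

@[simp] lemma dead_not_acc : (none : StS K) ∉ (stepDFA K).accept := by
  rw [acc_iff]
  push_neg
  exact ⟨by simp [finS], fun k => by simp [shS]⟩

@[simp] lemma dk_not_acc : (dkS : StS K) ∉ (stepDFA K).accept := by
  rw [acc_iff]
  push_neg
  exact ⟨by simp [finS, dkS], fun k => by simp [shS, dkS]⟩

@[simp] lemma dt_not_acc : (dtS : StS K) ∉ (stepDFA K).accept := by
  rw [acc_iff]
  push_neg
  exact ⟨by simp [finS, dtS], fun k => by simp [shS, dtS]⟩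

@[simp] lemma sh_acc_iff (k : K) (p : Sym K) :
    shS k p ∈ (stepDFA K).accept ↔ p = Sym.pop k := by
  rw [acc_iff]
  constructor
  · rintro (h | ⟨k', h⟩)
    · simp [shS, finS] at h
    · simp only [shS, Option.some.injEq, Sum.inr.injEq, Prod.mk.injEq] at h
      rw [h.2, h.1]
  · rintro rfl
    exact Or.inr ⟨k, rfl⟩

@[simp] lemma eval_dead (w : List (Pr K)) : (stepDFA K).evalFrom none w = none := by
  induction w with
  | nil => rfl
  | cons a t ih => simpa [DFA.evalFrom, stepDFA] using ih

lemma eval_fin_acc (w : List (Pr K)) :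
    (stepDFA K).evalFrom finS w ∈ (stepDFA K).accept ↔ w = [] := by
  cases w with
  | nil => simp [DFA.evalFrom]
  | cons a t =>
    have : (stepDFA K).evalFrom finS (a :: t) = (stepDFA K).evalFrom none t := rfl
    rw [this, eval_dead]
    simp

lemma eval_dk_diag (u : List K) (rest : List (Pr K)) :
    (stepDFA K).evalFrom dkS (diagP (kerW u) ++ rest) = (stepDFA K).evalFrom dkS rest := by
  induction u with
  | nil => rfl
  | cons k u ih =>
    have : (stepDFA K).evalFrom dkS (diagP (kerW (k :: u)) ++ rest)
        = (stepDFA K).evalFrom ((stepDFA K).step dkS (some (Sym.ker k), some (Sym.ker k)))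
          (diagP (kerW u) ++ rest) := rfl
    rw [this]
    have hs : (stepDFA K).step dkS (some (Sym.ker k), some (Sym.ker k)) = dkS := by
      simp [stepDFA, dkS]
    rw [hs, ih]

lemma eval_dt_diag {t : List (Sym K)} (ht : ∀ s ∈ t, s.isTail = true) (rest : List (Pr K)) :
    (stepDFA K).evalFrom dtS (diagP t ++ rest) = (stepDFA K).evalFrom dtS rest := by
  induction t with
  | nil => rfl
  | cons a t ih =>
    have : (stepDFA K).evalFrom dtS (diagP (a :: t) ++ rest)
        = (stepDFA K).evalFrom ((stepDFA K).step dtS (some a, some a)) (diagP t ++ rest) := rfl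
    rw [this]
    have hs : (stepDFA K).step dtS (some a, some a) = dtS := by
      have := ht a List.mem_cons_self
      simp [stepDFA, dtS, this]
    rw [hs, ih fun s hs => ht s (List.mem_cons_of_mem _ hs)]

lemma eval_sh_run {w : List (Sym K)} (hw : ∀ s ∈ w, s.isTail = true) (k : K) (p : Sym K) :
    (stepDFA K).evalFrom (shS k p) (zipP (p :: w) (w ++ [Sym.pop k])) = shS k (Sym.pop k) := by
  induction w generalizing p with
  | nil =>
    have h1 : zipP (p :: []) ([] ++ [Sym.pop k]) = [((some p : Option (Sym K)), some (Sym.pop k))] := rfl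
    rw [h1]
    have : (stepDFA K).evalFrom (shS k p) [(some p, some (Sym.pop k))]
        = (stepDFA K).step (shS k p) (some p, some (Sym.pop k)) := rfl
    rw [this]
    simp [stepDFA, shS, Sym.isTail]
  | cons y w ih =>
    have h1 : zipP (p :: y :: w) ((y :: w) ++ [Sym.pop k])
        = (some p, some y) :: zipP (y :: w) (w ++ [Sym.pop k]) := rfl
    rw [h1]
    have : (stepDFA K).evalFrom (shS k p) ((some p, some y) :: zipP (y :: w) (w ++ [Sym.pop k]))
        = (stepDFA K).evalFrom ((stepDFA K).step (shS k p) (some p, some y))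
          (zipP (y :: w) (w ++ [Sym.pop k])) := rfl
    rw [this]
    have hs : (stepDFA K).step (shS k p) (some p, some y) = shS k y := by
      have := hw y List.mem_cons_self
      simp [stepDFA, shS, this]
    rw [hs]
    exact ih (fun s hs => hw s (List.mem_cons_of_mem _ hs)) y

/-- soundness: convolutions of step pairs are accepted -/
lemma step_conv_accepted {l m : List (Sym K)} (h : Step l m) :
    conv2 l m ∈ (stepDFA K).accepts := by
  rw [DFA.mem_accepts]
  show (stepDFA K).evalFrom dkS (conv2 l m) ∈ (stepDFA K).accept
  rcases h with ⟨u, k, rfl, rfl⟩ | ⟨u, rfl, rfl⟩ | ⟨u, w, hw, rfl, rfl⟩ | ⟨u, k, w, hw, rfl, rfl⟩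
  · rw [conv2_self_append]
    show (stepDFA K).evalFrom dkS (diagP (kerW u) ++ [(none, some (Sym.ker k))]) ∈ _
    rw [eval_dk_diag]
    have : (stepDFA K).evalFrom dkS [((none : Option (Sym K)), some (Sym.ker k))] = finS := rfl
    rw [this]; simp
  · rw [conv2_self_append]
    show (stepDFA K).evalFrom dkS (diagP (kerW u) ++ [(none, some Sym.sep)]) ∈ _
    rw [eval_dk_diag]
    have : (stepDFA K).evalFrom dkS [((none : Option (Sym K)), some Sym.sep)] = finS := rfl
    rw [this]; simp
  · rw [conv2_self_append]
    show (stepDFA K).evalFrom dkS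
      (diagP (kerW u ++ Sym.sep :: w) ++ [(none, some Sym.ext)]) ∈ _
    have hde : diagP (kerW u ++ Sym.sep :: w) ++ [((none : Option (Sym K)), some Sym.ext)]
        = diagP (kerW u) ++ ((some Sym.sep, some Sym.sep) ::
            (diagP w ++ [(none, some Sym.ext)])) := by simp
    rw [hde, eval_dk_diag]
    have h1 : (stepDFA K).evalFrom dkS ((some Sym.sep, some Sym.sep) ::
          (diagP w ++ [((none : Option (Sym K)), some Sym.ext)]))
        = (stepDFA K).evalFrom dtS (diagP w ++ [(none, some Sym.ext)]) := rfl
    rw [h1, eval_dt_diag hw]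
    have h2 : (stepDFA K).evalFrom dtS [((none : Option (Sym K)), some Sym.ext)] = finS := rfl
    rw [h2]; simp
  · have hlen : (kerW u ++ Sym.ker k :: Sym.sep :: w).length
        = (kerW u ++ Sym.sep :: (w ++ [Sym.pop k])).length := by simp
    rw [conv2_eq_zipWith hlen]
    have hz : List.zipWith (fun a b => ((some a : Option (Sym K)), (some b : Option (Sym K))))
          (kerW u ++ Sym.ker k :: Sym.sep :: w) (kerW u ++ Sym.sep :: (w ++ [Sym.pop k]))
        = diagP (kerW u) ++ ((some (Sym.ker k), some Sym.sep) ::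
            zipP (Sym.sep :: w) (w ++ [Sym.pop k])) := by
      rw [List.zipWith_append (h := rfl)]
      rw [← zipP_self]
      rfl
    rw [hz, eval_dk_diag]
    have h1 : (stepDFA K).evalFrom dkS ((some (Sym.ker k), some Sym.sep) ::
          zipP (Sym.sep :: w) (w ++ [Sym.pop k]))
        = (stepDFA K).evalFrom (shS k Sym.sep) (zipP (Sym.sep :: w) (w ++ [Sym.pop k])) := rfl
    rw [h1, eval_sh_run hw]
    simp

end StepRegular


section StepComplete

variable {K : Type} [DecidableEq K]

lemma step_cons_ker {l m : List (Sym K)} (x : K) (h : Step l m) :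
    Step (Sym.ker x :: l) (Sym.ker x :: m) := by
  rcases h with ⟨u, k, rfl, rfl⟩ | ⟨u, rfl, rfl⟩ | ⟨u, w, hw, rfl, rfl⟩ | ⟨u, k, w, hw, rfl, rfl⟩
  · exact Or.inl ⟨x :: u, k, rfl, rfl⟩
  · exact Or.inr (Or.inl ⟨x :: u, rfl, rfl⟩)
  · exact Or.inr (Or.inr (Or.inl ⟨x :: u, w, hw, rfl, rfl⟩))
  · exact Or.inr (Or.inr (Or.inr ⟨x :: u, k, w, hw, rfl, rfl⟩))

lemma dead_elim {C : Prop} {t : List (Pr K)}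
    (h : (stepDFA K).evalFrom (none : StS K) t ∈ (stepDFA K).accept) : C := by
  rw [eval_dead] at h
  exact absurd h dead_not_acc

lemma comp_dt : ∀ t : List (Pr K), (stepDFA K).evalFrom dtS t ∈ (stepDFA K).accept →
    ∃ ys : List (Sym K), (∀ s ∈ ys, s.isTail = true) ∧
      t = diagP ys ++ [(none, some Sym.ext)] := by
  intro t
  induction t with
  | nil => intro h; exact absurd h dt_not_acc
  | cons a t ih =>
    intro h
    rcases a with ⟨(_ | x), (_ | y)⟩
    · exact dead_elim h
    · cases y with
      | ext =>
        have h' : (stepDFA K).evalFrom finS t ∈ (stepDFA K).accept := h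
        rw [eval_fin_acc] at h'
        subst h'
        exact ⟨[], by simp, rfl⟩
      | ker k => exact dead_elim h
      | sep => exact dead_elim h
      | pop k => exact dead_elim h
    · cases x <;>
        exact dead_elim h
    · have hev : (stepDFA K).evalFrom dtS ((some x, some y) :: t)
          = (stepDFA K).evalFrom
            (if x = y ∧ x.isTail = true then dtS else none) t := rfl
      rw [hev] at h
      by_cases hc : x = y ∧ x.isTail = true
      · rw [if_pos hc] at h
        obtain ⟨ys, hys, rfl⟩ := ih h
        obtain ⟨rfl, hx⟩ := hc
        refine ⟨x :: ys, ?_, rfl⟩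
        intro s hs
        rcases List.mem_cons.1 hs with rfl | hs
        exacts [hx, hys s hs]
      · rw [if_neg hc, eval_dead] at h
        exact absurd h dead_not_acc

lemma comp_sh (k : K) : ∀ (t : List (Pr K)) (p : Sym K),
    (stepDFA K).evalFrom (shS k p) t ∈ (stepDFA K).accept →
    ∃ ys : List (Sym K), (∀ s ∈ ys, s.isTail = true) ∧
      (p :: ys).getLast? = some (Sym.pop k) ∧ t = zipP (p :: ys) ys := by
  intro t
  induction t with
  | nil =>
    intro p h
    have h' : shS k p ∈ (stepDFA K).accept := h
    rw [sh_acc_iff] at h'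
    exact ⟨[], by simp, by simp [h'], rfl⟩
  | cons a t ih =>
    intro p h
    rcases a with ⟨(_ | x), (_ | y)⟩
    · exact dead_elim h
    · exact dead_elim h
    · cases x <;>
        exact dead_elim h
    · have hev : (stepDFA K).evalFrom (shS k p) ((some x, some y) :: t)
          = (stepDFA K).evalFrom
            (if x = p ∧ y.isTail = true then shS k y else none) t := rfl
      rw [hev] at h
      by_cases hc : x = p ∧ y.isTail = true
      · rw [if_pos hc] at h
        obtain ⟨rfl, hy⟩ := hc
        obtain ⟨ys, hys, hlast, rfl⟩ := ih y h
        refine ⟨y :: ys, ?_, ?_, rfl⟩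
        · intro s hs
          rcases List.mem_cons.1 hs with rfl | hs
          exacts [hy, hys s hs]
        · rw [List.getLast?_cons_cons]
          exact hlast
      · rw [if_neg hc, eval_dead] at h
        exact absurd h dead_not_acc

lemma comp_dk : ∀ w : List (Pr K), (stepDFA K).evalFrom dkS w ∈ (stepDFA K).accept →
    ∃ l m : List (Sym K), Step l m ∧ w = conv2 l m := by
  intro w
  induction w with
  | nil => intro h; exact absurd h dk_not_acc
  | cons a t ih =>
    intro h
    rcases a with ⟨(_ | x), (_ | y)⟩
    · exact dead_elim h
    · -- (none, some y)
      cases y with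
      | ker k =>
        have h' : (stepDFA K).evalFrom finS t ∈ (stepDFA K).accept := h
        rw [eval_fin_acc] at h'
        subst h'
        refine ⟨[], [Sym.ker k], Or.inl ⟨[], k, rfl, rfl⟩, ?_⟩
        rw [conv2_nil_cons, conv2_nil_nil]
      | sep =>
        have h' : (stepDFA K).evalFrom finS t ∈ (stepDFA K).accept := h
        rw [eval_fin_acc] at h'
        subst h'
        refine ⟨[], [Sym.sep], Or.inr (Or.inl ⟨[], rfl, rfl⟩), ?_⟩
        rw [conv2_nil_cons, conv2_nil_nil]
      | ext => exact dead_elim h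
      | pop k => exact dead_elim h
    · cases x <;>
        exact dead_elim h
    · -- (some x, some y)
      cases x with
      | ker xk =>
        cases y with
        | ker yk =>
          have hev : (stepDFA K).evalFrom dkS ((some (Sym.ker xk), some (Sym.ker yk)) :: t)
              = (stepDFA K).evalFrom (if xk = yk then dkS else none) t := rfl
          rw [hev] at h
          by_cases hc : xk = yk
          · rw [if_pos hc] at h
            subst hc
            obtain ⟨l, m, hS, rfl⟩ := ih h
            exact ⟨Sym.ker xk :: l, Sym.ker xk :: m, step_cons_ker xk hS,
              (conv2_cons_cons _ _ _ _).symm⟩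
          · rw [if_neg hc, eval_dead] at h
            exact absurd h dead_not_acc
        | sep =>
          -- shift branch
          have h' : (stepDFA K).evalFrom (shS xk Sym.sep) t ∈ (stepDFA K).accept := h
          obtain ⟨ys, hys, hlast, rfl⟩ := comp_sh xk t Sym.sep h'
          rcases ys.eq_nil_or_concat with rfl | ⟨w1, z, rfl⟩
          · simp at hlast
          rw [List.concat_eq_append] at *
          have hz : z = Sym.pop xk := by
            have : (Sym.sep :: (w1 ++ [z])).getLast? = some z := by
              rw [show Sym.sep :: (w1 ++ [z]) = (Sym.sep :: w1) ++ [z] from rfl]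
              exact List.getLast?_concat
            rw [this] at hlast
            exact Option.some_injective _ hlast
          subst hz
          have hw1 : ∀ s ∈ w1, s.isTail = true := fun s hs => hys s (by simp [hs])
          refine ⟨Sym.ker xk :: Sym.sep :: w1, Sym.sep :: (w1 ++ [Sym.pop xk]),
            Or.inr (Or.inr (Or.inr ⟨[], xk, w1, hw1, rfl, rfl⟩)), ?_⟩
          have hlen : (Sym.ker xk :: Sym.sep :: w1).length
              = (Sym.sep :: (w1 ++ [Sym.pop xk])).length := by simp
          rw [conv2_eq_zipWith hlen]
          have hzz : List.zipWith
                (fun a b => ((some a : Option (Sym K)), (some b : Option (Sym K))))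
                (Sym.ker xk :: Sym.sep :: w1) (Sym.sep :: (w1 ++ [Sym.pop xk]))
              = (some (Sym.ker xk), some Sym.sep) :: zipP (Sym.sep :: w1) (w1 ++ [Sym.pop xk]) := rfl
          rw [hzz]
          congr 1
          show zipP (Sym.sep :: (w1 ++ [Sym.pop xk])) (w1 ++ [Sym.pop xk]) = _
          rw [show Sym.sep :: (w1 ++ [Sym.pop xk]) = (Sym.sep :: w1) ++ [Sym.pop xk] from rfl]
          exact zipWith_snoc_left _ _ _ _ (by simp)
        | ext => exact dead_elim h
        | pop k => exact dead_elim h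
      | sep =>
        cases y with
        | sep =>
          have h' : (stepDFA K).evalFrom dtS t ∈ (stepDFA K).accept := h
          obtain ⟨ys, hys, rfl⟩ := comp_dt t h'
          refine ⟨Sym.sep :: ys, (Sym.sep :: ys) ++ [Sym.ext],
            Or.inr (Or.inr (Or.inl ⟨[], ys, hys, rfl, rfl⟩)), ?_⟩
          rw [conv2_self_append]
          rfl
        | ker k => exact dead_elim h
        | ext => exact dead_elim h
        | pop k => exact dead_elim h
      | ext =>
        cases y <;>
          exact dead_elim h
      | pop xk =>
        cases y <;>
          exact dead_elim h

lemma step_regular [Fintype K] : IsRegularRel2 (Step (K := K)) := by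
  refine ⟨StS K, inferInstance, stepDFA K, ?_⟩
  ext w
  rw [DFA.mem_accepts]
  constructor
  · intro h
    exact comp_dk w h
  · rintro ⟨l, m, hS, rfl⟩
    exact step_conv_accepted hS

end StepComplete



/-- **Examples.** There is an automatic successor tree of Cantor–Bendixson rank exactly `ω`,
and there is an automatic successor tree of Cantor–Bendixson rank exactly `ω + 1`. -/
theorem automatic_succ_tree_CB_rank_omega_and_omega_add_one :
    (∃ (A : Type) (_ : Fintype A) (dom : Set (List A)) (S : List A → List A → Prop)
      (_ : ∀ x y, S x y → x ∈ dom ∧ y ∈ dom),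
      IsRegularLang dom ∧ IsRegularRel2 S ∧
      IsSuccTree (fun x y : ↥dom => S ↑x ↑y) ∧
      CBrank (fun x y : ↥dom => S ↑x ↑y) = Ordinal.omega0) ∧
    (∃ (A : Type) (_ : Fintype A) (dom : Set (List A)) (S : List A → List A → Prop)
      (_ : ∀ x y, S x y → x ∈ dom ∧ y ∈ dom),
      IsRegularLang dom ∧ IsRegularRel2 S ∧
      IsSuccTree (fun x y : ↥dom => S ↑x ↑y) ∧
      CBrank (fun x y : ↥dom => S ↑x ↑y) = Ordinal.omega0 + 1) := by
  constructor
  · exact ⟨Sym Bool, inferInstance, Dom, Step, fun x y h => step_mem_dom h,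
      dom_regular, step_regular, isSuccTree_SS,
      cbrank_branching true false (by simp)⟩
  · exact ⟨Sym Unit, inferInstance, Dom, Step, fun x y h => step_mem_dom h,
      dom_regular, step_regular, isSuccTree_SS,
      cbrank_spine⟩


end AutoStruct
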